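/- The two planar vector fields X(x,y) = (-y + x Q(x,y) S(x²+y²), x + y Q(x,y) S(x²+y²)) and Y(x,y) = (x (x²+y²)^{k/2} S(x²+y²), y (x²+y²)^{k/2} S(x²+y²)) commute: their Lie bracket [X, Y] vanishes identically on ℝ² ∖ {0} (and on all of ℝ² when k is even). -/

import Mathlib

open Real MvPolynomial

lemma powaux (a : ℕ) (x : ℝ) : x * ((a : ℝ) * x ^ (a - 1)) = a * x ^ a := by
  cases a with
  | zero => simp
  | succ n => rw [Nat.succ_sub_one]; push_cast; ring

lemma evalQ_deriv (k : ℕ) (Q : MvPolynomial (Fin 2) ℝ) (hQ : Q.IsHomogeneous k) (p : ℝ × ℝ) :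
    ∃ qx qy : ℝ,
      HasFDerivAt (fun z : ℝ × ℝ => eval ![z.1, z.2] Q)
        (qx • ContinuousLinearMap.fst ℝ ℝ ℝ + qy • ContinuousLinearMap.snd ℝ ℝ ℝ) p ∧
      p.1 * qx + p.2 * qy = k * eval ![p.1, p.2] Q := by
  have hrepr : ∀ z : ℝ × ℝ, eval ![z.1, z.2] Q
      = ∑ d ∈ Q.support, Q.coeff d * (z.1 ^ d 0 * z.2 ^ d 1) := by
    intro z
    rw [eval_eq']
    refine Finset.sum_congr rfl fun d _ => ?_
    rw [Fin.prod_univ_two]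
    simp
  refine ⟨∑ d ∈ Q.support, Q.coeff d * ((d 0 : ℝ) * p.1 ^ (d 0 - 1) * p.2 ^ d 1),
    ∑ d ∈ Q.support, Q.coeff d * (p.1 ^ d 0 * ((d 1 : ℝ) * p.2 ^ (d 1 - 1))), ?_, ?_⟩
  · have hterm : ∀ d ∈ Q.support,
        HasFDerivAt (fun z : ℝ × ℝ => Q.coeff d * (z.1 ^ d 0 * z.2 ^ d 1))
          ((Q.coeff d * ((d 0 : ℝ) * p.1 ^ (d 0 - 1) * p.2 ^ d 1)) • ContinuousLinearMap.fst ℝ ℝ ℝ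
            + (Q.coeff d * (p.1 ^ d 0 * ((d 1 : ℝ) * p.2 ^ (d 1 - 1)))) • ContinuousLinearMap.snd ℝ ℝ ℝ) p := by
      intro d _
      have hx : HasFDerivAt (fun z : ℝ × ℝ => z.1 ^ d 0)
          (((d 0 : ℝ) * p.1 ^ (d 0 - 1)) • ContinuousLinearMap.fst ℝ ℝ ℝ) p :=
        (hasDerivAt_pow (d 0) p.1).comp_hasFDerivAt p hasFDerivAt_fst
      have hy : HasFDerivAt (fun z : ℝ × ℝ => z.2 ^ d 1)
          (((d 1 : ℝ) * p.2 ^ (d 1 - 1)) • ContinuousLinearMap.snd ℝ ℝ ℝ) p :=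
        (hasDerivAt_pow (d 1) p.2).comp_hasFDerivAt p hasFDerivAt_snd
      have h := (hx.mul hy).const_mul (Q.coeff d)
      refine h.congr_fderiv ?_
      refine ContinuousLinearMap.ext fun v => ?_
      simp [smul_eq_mul]
      ring
    have hsum := HasFDerivAt.fun_sum hterm
    have heq : (fun z : ℝ × ℝ => eval ![z.1, z.2] Q)
        = fun z : ℝ × ℝ => ∑ d ∈ Q.support, Q.coeff d * (z.1 ^ d 0 * z.2 ^ d 1) :=
      funext hrepr
    rw [heq]
    refine hsum.congr_fderiv ?_
    rw [Finset.sum_add_distrib, Finset.sum_smul, Finset.sum_smul]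
  · rw [hrepr p, Finset.mul_sum, Finset.mul_sum, Finset.mul_sum, ← Finset.sum_add_distrib]
    refine Finset.sum_congr rfl fun d hd => ?_
    have hk : d 0 + d 1 = k := by
      have h := hQ (mem_support_iff.mp hd)
      rw [Finsupp.weight_apply, Finsupp.sum_fintype] at h
      · simpa [Fin.sum_univ_two] using h
      · intro i; simp
    have h1 := powaux (d 0) p.1
    have h2 := powaux (d 1) p.2
    rw [← hk]
    push_cast
    linear_combination (Q.coeff d * p.2 ^ d 1) * h1 + (Q.coeff d * p.1 ^ d 0) * h2

/-- The system commutes with the field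
`Y = ((x²+y²)^(k/2) S(x²+y²)) (x, y)`: the Lie bracket `[X,Y] = DY·X − DX·Y`
vanishes on `ℝ² ∖ {0}`, and everywhere when `k` is even. -/
theorem stmt6 (k m : ℕ) (Q : MvPolynomial (Fin 2) ℝ) (hQ : Q.IsHomogeneous k)
    (a : ℕ → ℝ) (S : ℝ → ℝ)
    (hS : ∀ u, S u = ∑ i ∈ Finset.range (m + 1), a i * u ^ i)
    (X Y : ℝ × ℝ → ℝ × ℝ)
    (hX : ∀ p : ℝ × ℝ, X p =
      (-p.2 + p.1 * eval ![p.1, p.2] Q * S (p.1 ^ 2 + p.2 ^ 2),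
        p.1 + p.2 * eval ![p.1, p.2] Q * S (p.1 ^ 2 + p.2 ^ 2)))
    (hY : ∀ p : ℝ × ℝ, Y p =
      (p.1 * (p.1 ^ 2 + p.2 ^ 2) ^ ((k : ℝ) / 2) * S (p.1 ^ 2 + p.2 ^ 2),
        p.2 * (p.1 ^ 2 + p.2 ^ 2) ^ ((k : ℝ) / 2) * S (p.1 ^ 2 + p.2 ^ 2))) :
    (∀ p : ℝ × ℝ, p ≠ 0 → fderiv ℝ Y p (X p) - fderiv ℝ X p (Y p) = 0) ∧
      (Even k → ∀ p : ℝ × ℝ, fderiv ℝ Y p (X p) - fderiv ℝ X p (Y p) = 0) := by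
  have key : ∀ p : ℝ × ℝ, p ≠ 0 → fderiv ℝ Y p (X p) - fderiv ℝ X p (Y p) = 0 := by
    intro p hp
    have hu : (0:ℝ) < p.1 ^ 2 + p.2 ^ 2 := by
      have h : p.1 ≠ 0 ∨ p.2 ≠ 0 := by
        by_contra h; push_neg at h; exact hp (Prod.ext h.1 h.2)
      rcases h with h | h <;> positivity
    -- derivative of the norm-square
    have hn : HasFDerivAt (fun z : ℝ × ℝ => z.1 ^ 2 + z.2 ^ 2)
        ((2 * p.1) • ContinuousLinearMap.fst ℝ ℝ ℝ + (2 * p.2) • ContinuousLinearMap.snd ℝ ℝ ℝ) p := by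
      have hx := (hasDerivAt_pow 2 p.1).comp_hasFDerivAt p (hasFDerivAt_fst : HasFDerivAt _ (ContinuousLinearMap.fst ℝ ℝ ℝ) p)
      have hy := (hasDerivAt_pow 2 p.2).comp_hasFDerivAt p (hasFDerivAt_snd : HasFDerivAt _ (ContinuousLinearMap.snd ℝ ℝ ℝ) p)
      refine HasFDerivAt.congr_fderiv (hx.add hy) ?_
      refine ContinuousLinearMap.ext fun v => ?_
      simp [smul_eq_mul]
      try ring
    -- derivative of S ∘ n
    have hSn : HasFDerivAt (fun z : ℝ × ℝ => S (z.1 ^ 2 + z.2 ^ 2))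
        ((∑ i ∈ Finset.range (m + 1), a i * (i * (p.1 ^ 2 + p.2 ^ 2) ^ (i - 1))) •
          ((2 * p.1) • ContinuousLinearMap.fst ℝ ℝ ℝ + (2 * p.2) • ContinuousLinearMap.snd ℝ ℝ ℝ)) p := by
      have hSeq : S = fun u : ℝ => ∑ i ∈ Finset.range (m + 1), a i * u ^ i := funext hS
      rw [hSeq]
      exact (HasDerivAt.fun_sum fun i _ =>
        (hasDerivAt_pow i (p.1 ^ 2 + p.2 ^ 2)).const_mul (a i)).comp_hasFDerivAt p hn
    -- derivative of rpow ∘ n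
    have hRn : HasFDerivAt (fun z : ℝ × ℝ => (z.1 ^ 2 + z.2 ^ 2) ^ ((k : ℝ) / 2))
        (((k : ℝ) / 2 * (p.1 ^ 2 + p.2 ^ 2) ^ ((k : ℝ) / 2 - 1)) •
          ((2 * p.1) • ContinuousLinearMap.fst ℝ ℝ ℝ + (2 * p.2) • ContinuousLinearMap.snd ℝ ℝ ℝ)) p :=
      (Real.hasDerivAt_rpow_const (x := p.1 ^ 2 + p.2 ^ 2) (p := (k : ℝ) / 2) (Or.inl hu.ne')).comp_hasFDerivAt (f := fun z : ℝ × ℝ => z.1 ^ 2 + z.2 ^ 2) p hn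
    obtain ⟨qx, qy, hq, hE⟩ := evalQ_deriv k Q hQ p
    have hXd := (HasFDerivAt.prodMk (hasFDerivAt_snd.fun_neg.fun_add ((hasFDerivAt_fst.fun_mul hq).fun_mul hSn))
      (hasFDerivAt_fst.fun_add ((hasFDerivAt_snd.fun_mul hq).fun_mul hSn)))
    have hYd := (HasFDerivAt.prodMk ((hasFDerivAt_fst.fun_mul hRn).fun_mul hSn)
      ((hasFDerivAt_snd.fun_mul hRn).fun_mul hSn))
    have hXeq : X = _ := funext hX
    have hYeq : Y = _ := funext hY
    rw [hXeq, hYeq]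
    rw [hXd.fderiv, hYd.fderiv]
    simp only [ContinuousLinearMap.prod_apply, ContinuousLinearMap.add_apply,
      ContinuousLinearMap.coe_smul', Pi.smul_apply, ContinuousLinearMap.neg_apply,
      ContinuousLinearMap.coe_fst', ContinuousLinearMap.coe_snd', smul_eq_mul,
      Prod.mk_sub_mk, Prod.mk_eq_zero]
    have hR : (p.1^2+p.2^2) ^ ((k:ℝ)/2 - 1) * (p.1^2+p.2^2) = (p.1^2+p.2^2) ^ ((k:ℝ)/2) := by
      have h2 := Real.rpow_add hu ((k:ℝ)/2 - 1) 1
      rw [Real.rpow_one] at h2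
      rw [← h2]
      norm_num
    constructor
    · linear_combination ((k:ℝ) * p.1 * eval ![p.1,p.2] Q * S (p.1^2+p.2^2) ^ 2) * hR +
        (-(p.1 * S (p.1^2+p.2^2) ^ 2 * (p.1^2+p.2^2) ^ ((k:ℝ)/2))) * hE
    · linear_combination ((k:ℝ) * p.2 * eval ![p.1,p.2] Q * S (p.1^2+p.2^2) ^ 2) * hR +
        (-(p.2 * S (p.1^2+p.2^2) ^ 2 * (p.1^2+p.2^2) ^ ((k:ℝ)/2))) * hE
  refine ⟨key, fun _ p => ?_⟩
  by_cases hp : p = 0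
  · subst hp
    have hX0 : X 0 = 0 := by rw [hX]; simp
    have hY0 : Y 0 = 0 := by rw [hY]; simp
    rw [hX0, hY0]
    simp
  · exact key p hp
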